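/- Let θ ∈ (1/2, 1) and α ∈ (0, 1]. If f : Z → W satisfies ‖f(z)‖ ≤ σ for all z ∈ Z, then for every t ≥ 1, Σ_{i=1}^{t} (1/i^{2θ}) · (Π_{k=i+1}^{t} (1 − α/k^θ))² · ∫_Z ‖f(z)‖² dρ(z) ≤ σ² C_θ (1/α)^{θ/(1−θ)} (1/(t+1))^θ. -/

import Mathlib

set_option maxHeartbeats 1000000


open MeasureTheory

private lemma dsb_tele (a : ℕ → ℝ) (h0 : ∀ k, 0 ≤ a k) (h1 : ∀ k, a k ≤ 1) (t : ℕ) :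
    ∑ i ∈ Finset.Icc 1 t, a i * ∏ k ∈ Finset.Ioc i t, (1 - a k) ≤ 1 := by
  induction t with
  | zero => simp
  | succ n ih =>
    rw [Finset.sum_Icc_succ_top (Nat.le_add_left 1 n)]
    have hrw : ∀ i ∈ Finset.Icc 1 n,
        a i * ∏ k ∈ Finset.Ioc i (n + 1), (1 - a k)
          = (a i * ∏ k ∈ Finset.Ioc i n, (1 - a k)) * (1 - a (n + 1)) := by
      intro i hi
      rw [Finset.prod_Ioc_succ_top (Finset.mem_Icc.mp hi).2]
      ring
    rw [Finset.sum_congr rfl hrw, ← Finset.sum_mul]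
    have h2 : (∑ i ∈ Finset.Icc 1 n, a i * ∏ k ∈ Finset.Ioc i n, (1 - a k)) * (1 - a (n + 1))
        ≤ 1 * (1 - a (n + 1)) :=
      mul_le_mul_of_nonneg_right ih (by linarith [h1 (n + 1)])
    have h3 : (∏ k ∈ Finset.Ioc (n + 1) (n + 1), (1 - a k)) = 1 := by simp
    rw [h3]
    nlinarith [h0 (n + 1)]

private lemma dsb_step1 (θ : ℝ) (hθ0 : 0 < θ) (hθ1 : θ < 1) {x : ℝ} (hx : 1 ≤ x) :
    (x + 1) ^ (1 - θ) - x ^ (1 - θ) ≤ (1 - θ) * (1 / x ^ θ) := by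
  have hx0 : 0 < x := by linarith
  have hxinv : 0 ≤ 1 / x := by positivity
  have key : (1 + 1 / x) ^ (1 - θ) ≤ 1 + (1 - θ) * (1 / x) :=
    rpow_one_add_le_one_add_mul_self (by linarith) (by linarith) (by linarith)
  have hxx : x + 1 = x * (1 + 1 / x) := by field_simp
  have h1 : (x + 1) ^ (1 - θ) ≤ x ^ (1 - θ) + (1 - θ) * (x ^ (1 - θ) / x) := by
    calc (x + 1) ^ (1 - θ) = x ^ (1 - θ) * (1 + 1 / x) ^ (1 - θ) := by
          rw [hxx, Real.mul_rpow hx0.le (by positivity)]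
      _ ≤ x ^ (1 - θ) * (1 + (1 - θ) * (1 / x)) :=
          mul_le_mul_of_nonneg_left key (Real.rpow_nonneg hx0.le _)
      _ = x ^ (1 - θ) + (1 - θ) * (x ^ (1 - θ) / x) := by ring
  have e1 : x ^ (1 - θ) = x / x ^ θ := by
    rw [Real.rpow_sub hx0, Real.rpow_one]
  have e2 : x ^ (1 - θ) / x = 1 / x ^ θ := by
    rw [e1]
    field_simp
  rw [e2] at h1
  linarith

private lemma dsb_sum_inv_rpow (θ : ℝ) (hθ0 : 0 < θ) (hθ1 : θ < 1) (i t : ℕ) (h : i ≤ t) :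
    (((t : ℝ) + 1) ^ (1 - θ) - ((i : ℝ) + 1) ^ (1 - θ)) / (1 - θ)
      ≤ ∑ k ∈ Finset.Ioc i t, 1 / (k : ℝ) ^ θ := by
  have h1θ : 0 < 1 - θ := by linarith
  induction t, h using Nat.le_induction with
  | base => simp
  | succ n hn ih =>
    rw [Finset.sum_Ioc_succ_top hn]
    have hn1 : (1 : ℝ) ≤ (n : ℝ) + 1 := by
      have : (0 : ℝ) ≤ (n : ℝ) := Nat.cast_nonneg n
      linarith
    have hstep := dsb_step1 θ hθ0 hθ1 hn1
    have h2 : (((n : ℝ) + 1 + 1) ^ (1 - θ) - ((n : ℝ) + 1) ^ (1 - θ)) / (1 - θ)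
        ≤ 1 / ((n : ℝ) + 1) ^ θ := by
      rw [div_le_iff₀ h1θ]
      nlinarith [hstep]
    push_cast
    calc (((n : ℝ) + 1 + 1) ^ (1 - θ) - ((i : ℝ) + 1) ^ (1 - θ)) / (1 - θ)
        = (((n : ℝ) + 1) ^ (1 - θ) - ((i : ℝ) + 1) ^ (1 - θ)) / (1 - θ)
          + (((n : ℝ) + 1 + 1) ^ (1 - θ) - ((n : ℝ) + 1) ^ (1 - θ)) / (1 - θ) := by ring
      _ ≤ (∑ k ∈ Finset.Ioc i n, 1 / (k : ℝ) ^ θ) + 1 / ((n : ℝ) + 1) ^ θ := add_le_add ih h2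

private lemma dsb_step2 (θ : ℝ) (hθ : 1 / 2 < θ) (hθ1 : θ < 1) {y : ℝ} (hy : 2 ≤ y) :
    1 / y ^ (2 * θ) ≤ ((y - 1) ^ (1 - 2 * θ) - y ^ (1 - 2 * θ)) / (2 * θ - 1) := by
  set p : ℝ := 2 * θ - 1 with hp_def
  have hp0 : 0 < p := by simp only [hp_def]; linarith
  have hp1 : p < 1 := by simp only [hp_def]; linarith
  have hy0 : 0 < y := by linarith
  have hy1 : 0 < y - 1 := by linarith
  have hyinv : 1 / y ≤ 1 / 2 := by
    rw [div_le_div_iff₀ hy0 (by norm_num)]; linarith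
  have hyinv0 : 0 < 1 / y := by positivity
  have hber : (1 - 1 / y) ^ p ≤ 1 - p / y := by
    have h := rpow_one_add_le_one_add_mul_self (s := -(1 / y)) (by linarith) hp0.le hp1.le
    rw [show (1 : ℝ) + -(1 / y) = 1 - 1 / y by ring,
      show (1 : ℝ) + p * -(1 / y) = 1 - p / y by rw [div_eq_mul_one_div p y]; ring] at h
    exact h
  have hA : (y - 1) ^ p ≤ y ^ p * (1 - p / y) := by
    have e : y - 1 = y * (1 - 1 / y) := by field_simp
    rw [e, Real.mul_rpow hy0.le (by linarith)]
    exact mul_le_mul_of_nonneg_left hber (Real.rpow_nonneg hy0.le _)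
  set u : ℝ := y ^ p with hu_def
  set w : ℝ := (y - 1) ^ p with hw_def
  have hu0 : 0 < u := Real.rpow_pos_of_pos hy0 _
  have hw0 : 0 < w := Real.rpow_pos_of_pos hy1 _
  have e2θ : y ^ (2 * θ) = u * y := by
    rw [hu_def, show 2 * θ = p + 1 by rw [hp_def]; ring, Real.rpow_add hy0, Real.rpow_one]
  have eneg1 : y ^ (1 - 2 * θ) = u⁻¹ := by
    rw [hu_def, show 1 - 2 * θ = -p by rw [hp_def]; ring, Real.rpow_neg hy0.le]
  have eneg2 : (y - 1) ^ (1 - 2 * θ) = w⁻¹ := by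
    rw [hw_def, show 1 - 2 * θ = -p by rw [hp_def]; ring, Real.rpow_neg hy1.le]
  rw [e2θ, eneg1, eneg2]
  clear_value p u w
  have hpy : p / y < 1 := by
    rw [div_lt_one hy0]; linarith
  have h3 : (p + y) * w ≤ u * y := by
    have h4 : (p + y) * w ≤ (p + y) * (u * (1 - p / y)) :=
      mul_le_mul_of_nonneg_left hA (by linarith)
    have h5 : (p + y) * (u * (1 - p / y)) = u * y - u * p ^ 2 / y := by
      field_simp
      ring
    have h6 : 0 ≤ u * p ^ 2 / y := by positivity
    rw [h5] at h4
    linarith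
  rw [div_le_div_iff₀ (by positivity) hp0]
  have e7 : (w⁻¹ - u⁻¹) * (u * y) = u * y / w - y := by
    field_simp
  rw [e7]
  have h8 : p + y ≤ u * y / w := (le_div_iff₀ hw0).mpr h3
  linarith

private lemma dsb_sum_sq (θ : ℝ) (hθ : 1 / 2 < θ) (hθ1 : θ < 1) (t : ℕ) (ht : 1 ≤ t) :
    ∑ i ∈ Finset.Icc 1 t, 1 / (i : ℝ) ^ (2 * θ) ≤ 2 / (2 * θ - 1) := by
  have hp0 : (0 : ℝ) < 2 * θ - 1 := by linarith
  have main : ∑ i ∈ Finset.Icc 1 t, 1 / (i : ℝ) ^ (2 * θ)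
      ≤ 1 + (1 - (t : ℝ) ^ (1 - 2 * θ)) / (2 * θ - 1) := by
    induction t, ht using Nat.le_induction with
    | base => simp
    | succ n hn ih =>
      rw [Finset.sum_Icc_succ_top (by omega : 1 ≤ n + 1)]
      have hy : (2 : ℝ) ≤ (n : ℝ) + 1 := by
        have : (1 : ℝ) ≤ (n : ℝ) := by exact_mod_cast hn
        linarith
      have hstep := dsb_step2 θ hθ hθ1 hy
      rw [show (n : ℝ) + 1 - 1 = (n : ℝ) by ring] at hstep
      push_cast
      calc (∑ i ∈ Finset.Icc 1 n, 1 / (i : ℝ) ^ (2 * θ)) + 1 / ((n : ℝ) + 1) ^ (2 * θ)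
          ≤ (1 + (1 - (n : ℝ) ^ (1 - 2 * θ)) / (2 * θ - 1))
            + ((n : ℝ) ^ (1 - 2 * θ) - ((n : ℝ) + 1) ^ (1 - 2 * θ)) / (2 * θ - 1) :=
            add_le_add ih hstep
        _ = 1 + (1 - ((n : ℝ) + 1) ^ (1 - 2 * θ)) / (2 * θ - 1) := by ring
  have ht0 : (0 : ℝ) ≤ (t : ℝ) ^ (1 - 2 * θ) := Real.rpow_nonneg (Nat.cast_nonneg t) _
  have h2 : (1 : ℝ) ≤ 1 / (2 * θ - 1) := by
    rw [le_div_iff₀ hp0]; linarith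
  have h1' : (1 - (t : ℝ) ^ (1 - 2 * θ)) / (2 * θ - 1) ≤ 1 / (2 * θ - 1) :=
    (div_le_div_iff_of_pos_right hp0).mpr (by linarith)
  calc ∑ i ∈ Finset.Icc 1 t, 1 / (i : ℝ) ^ (2 * θ)
      ≤ 1 + (1 - (t : ℝ) ^ (1 - 2 * θ)) / (2 * θ - 1) := main
    _ ≤ 1 / (2 * θ - 1) + 1 / (2 * θ - 1) := add_le_add h2 h1'
    _ = 2 / (2 * θ - 1) := by ring

private lemma dsb_sup (q : ℝ) (hq : 0 < q) {v : ℝ} (hv : 0 < v) :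
    v ^ q * Real.exp (-v) ≤ (q / Real.exp 1) ^ q := by
  have hs := Real.add_one_le_exp (v / q - 1)
  have h1 : v * Real.exp (-(v / q)) ≤ q / Real.exp 1 := by
    have e : Real.exp (v / q - 1) * Real.exp (-(v / q)) = (Real.exp 1)⁻¹ := by
      rw [← Real.exp_add, show v / q - 1 + -(v / q) = -1 by ring, Real.exp_neg]
    have hv' : v ≤ q * Real.exp (v / q - 1) := by
      have e2 : v = q * (v / q) := by field_simp
      calc v = q * (v / q) := e2
        _ ≤ q * Real.exp (v / q - 1) := mul_le_mul_of_nonneg_left (by linarith) hq.le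
    calc v * Real.exp (-(v / q)) ≤ q * Real.exp (v / q - 1) * Real.exp (-(v / q)) :=
          mul_le_mul_of_nonneg_right hv' (Real.exp_nonneg _)
      _ = q * (Real.exp 1)⁻¹ := by rw [mul_assoc, e]
      _ = q / Real.exp 1 := by rw [div_eq_mul_inv]
  have h2 : (v * Real.exp (-(v / q))) ^ q ≤ (q / Real.exp 1) ^ q :=
    Real.rpow_le_rpow (by positivity) h1 hq.le
  have e3 : (v * Real.exp (-(v / q))) ^ q = v ^ q * Real.exp (-v) := by
    rw [Real.mul_rpow hv.le (Real.exp_nonneg _),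
      Real.rpow_def_of_pos (Real.exp_pos _), Real.log_exp,
      show -(v / q) * q = -v by field_simp]
  rw [e3] at h2
  exact h2

private lemma dsb_exp_bound (q l u : ℝ) (hq : 0 < q) (hl : 0 < l) (hu : 0 < u) :
    Real.exp (-(l * u)) ≤ (q / (Real.exp 1 * l)) ^ q / u ^ q := by
  have h := dsb_sup q hq (mul_pos hl hu)
  have hp : 0 < (l * u) ^ q := Real.rpow_pos_of_pos (mul_pos hl hu) q
  have e : (q / (Real.exp 1 * l)) ^ q / u ^ q = (q / Real.exp 1) ^ q / (l * u) ^ q := by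
    rw [Real.div_rpow hq.le (by positivity), Real.div_rpow hq.le (Real.exp_nonneg 1),
      Real.mul_rpow (Real.exp_nonneg 1) hl.le, Real.mul_rpow hl.le hu.le]
    ring
  rw [e, le_div_iff₀ hp]
  calc Real.exp (-(l * u)) * (l * u) ^ q = (l * u) ^ q * Real.exp (-(l * u)) := by ring
    _ ≤ (q / Real.exp 1) ^ q := h

private lemma dsb_core (θ α : ℝ) (hθ1 : 1 / 2 < θ) (hθ2 : θ < 1)
    (hα1 : 0 < α) (hα2 : α ≤ 1) (t : ℕ) (ht : 1 ≤ t) :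
    ∑ i ∈ Finset.Icc 1 t, (1 / (i : ℝ) ^ (2 * θ)) *
        (∏ k ∈ Finset.Ioc i t, (1 - α / (k : ℝ) ^ θ)) ^ 2 ≤
      (8 + 2 / (2 * θ - 1) * (θ / (Real.exp 1 * (2 - 2 ^ θ))) ^ (θ / (1 - θ))) *
        (1 / α) ^ (θ / (1 - θ)) * (1 / ((t : ℝ) + 1)) ^ θ := by
  have hθ0 : (0 : ℝ) < θ := by linarith
  have h1θ : (0 : ℝ) < 1 - θ := by linarith
  set q : ℝ := θ / (1 - θ) with hq_def
  have hq1 : (1 : ℝ) ≤ q := by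
    rw [hq_def, le_div_iff₀ h1θ]; linarith
  have hq0 : (0 : ℝ) < q := by linarith
  have h2θ : (2 : ℝ) ^ θ < 2 := by
    calc (2 : ℝ) ^ θ < 2 ^ (1 : ℝ) := Real.rpow_lt_rpow_of_exponent_lt one_lt_two hθ2
      _ = 2 := Real.rpow_one 2
  have h2θ0 : (0 : ℝ) < 2 - 2 ^ θ := by linarith
  have hKbase : (0 : ℝ) < θ / (Real.exp 1 * (2 - 2 ^ θ)) :=
    div_pos hθ0 (mul_pos (Real.exp_pos 1) h2θ0)
  have hK0 : (0 : ℝ) ≤ (θ / (Real.exp 1 * (2 - 2 ^ θ))) ^ q := Real.rpow_nonneg hKbase.le _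
  have ht1 : (0 : ℝ) < (t : ℝ) + 1 := by positivity
  have hT0 : (0 : ℝ) ≤ (1 / ((t : ℝ) + 1)) ^ θ := Real.rpow_nonneg (by positivity) _
  have eT : (1 / ((t : ℝ) + 1)) ^ θ = 1 / ((t : ℝ) + 1) ^ θ := by
    rw [one_div, Real.inv_rpow ht1.le, one_div]
  have hTpos : (0 : ℝ) < ((t : ℝ) + 1) ^ θ := Real.rpow_pos_of_pos ht1 _
  -- facts about a k := α / k^θ
  have hk_pow : ∀ k : ℕ, 1 ≤ k → (1 : ℝ) ≤ (k : ℝ) ^ θ := by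
    intro k hk
    have h1 : (1 : ℝ) ≤ (k : ℝ) := by exact_mod_cast hk
    calc (1 : ℝ) = 1 ^ θ := (Real.one_rpow θ).symm
      _ ≤ (k : ℝ) ^ θ := Real.rpow_le_rpow zero_le_one h1 hθ0.le
  have ha0 : ∀ k : ℕ, 0 ≤ α / (k : ℝ) ^ θ := by
    intro k; positivity
  have ha1 : ∀ k : ℕ, α / (k : ℝ) ^ θ ≤ 1 := by
    intro k
    rcases Nat.eq_zero_or_pos k with h | h
    · subst h; simp [Real.zero_rpow hθ0.ne']
    · exact le_trans (div_le_self hα1.le (hk_pow k h)) hα2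
  have htele := dsb_tele (fun k => α / (k : ℝ) ^ θ) ha0 ha1 t
  have hD0 : ∀ i : ℕ, 0 ≤ ∏ k ∈ Finset.Ioc i t, (1 - α / (k : ℝ) ^ θ) := by
    intro i
    exact Finset.prod_nonneg fun k _ => by linarith [ha1 k]
  have hD1 : ∀ i : ℕ, (∏ k ∈ Finset.Ioc i t, (1 - α / (k : ℝ) ^ θ)) ≤ 1 := by
    intro i
    exact Finset.prod_le_one (fun k _ => by linarith [ha1 k]) (fun k _ => by linarith [ha0 k])
  have hsubsum : ∀ s : Finset ℕ, s ⊆ Finset.Icc 1 t →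
      ∑ i ∈ s, (α / (i : ℝ) ^ θ) * ∏ k ∈ Finset.Ioc i t, (1 - α / (k : ℝ) ^ θ) ≤ 1 := by
    intro s hs
    refine le_trans (Finset.sum_le_sum_of_subset_of_nonneg hs fun i _ _ =>
      mul_nonneg (ha0 i) (hD0 i)) htele
  have hinvα : (1 : ℝ) / α ≤ (1 / α) ^ q := by
    have h1α : (1 : ℝ) ≤ 1 / α := by
      rw [le_div_iff₀ hα1]; linarith
    calc (1 : ℝ) / α = (1 / α) ^ (1 : ℝ) := (Real.rpow_one _).symm
      _ ≤ (1 / α) ^ q := Real.rpow_le_rpow_of_exponent_le h1α hq1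
  -- split the sum
  rw [← Finset.sum_filter_add_sum_filter_not (Finset.Icc 1 t) (fun i => 2 * i + 1 ≤ t)]
  -- Part B : i with 2i+1 ≤ t
  set u : ℝ := ((t : ℝ) + 1) ^ (1 - θ) with hu_def
  set l : ℝ := α * (2 - 2 ^ θ) / (1 - θ) with hl_def
  have hl : 0 < l := div_pos (mul_pos hα1 h2θ0) h1θ
  have hu : 0 < u := Real.rpow_pos_of_pos ht1 _
  have hB_term : ∀ i ∈ (Finset.Icc 1 t).filter (fun i => 2 * i + 1 ≤ t),
      (∏ k ∈ Finset.Ioc i t, (1 - α / (k : ℝ) ^ θ)) ^ 2 ≤ Real.exp (-(l * u)) := by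
    intro i hi
    obtain ⟨hi1, hP⟩ := Finset.mem_filter.mp hi
    obtain ⟨hi1a, hi1b⟩ := Finset.mem_Icc.mp hi1
    have h1 : (∏ k ∈ Finset.Ioc i t, (1 - α / (k : ℝ) ^ θ))
        ≤ Real.exp (-(α * ∑ k ∈ Finset.Ioc i t, 1 / (k : ℝ) ^ θ)) := by
      have hsum_eq : ∑ k ∈ Finset.Ioc i t, -(α / (k : ℝ) ^ θ)
          = -(α * ∑ k ∈ Finset.Ioc i t, 1 / (k : ℝ) ^ θ) := by
        rw [Finset.sum_neg_distrib, Finset.mul_sum, neg_inj]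
        exact Finset.sum_congr rfl fun k _ => by rw [mul_one_div]
      calc (∏ k ∈ Finset.Ioc i t, (1 - α / (k : ℝ) ^ θ))
          ≤ ∏ k ∈ Finset.Ioc i t, Real.exp (-(α / (k : ℝ) ^ θ)) := by
            refine Finset.prod_le_prod (fun k _ => by linarith [ha1 k]) fun k _ => ?_
            have h := Real.add_one_le_exp (-(α / (k : ℝ) ^ θ))
            linarith
        _ = Real.exp (∑ k ∈ Finset.Ioc i t, -(α / (k : ℝ) ^ θ)) := (Real.exp_sum _ _).symm
        _ = Real.exp (-(α * ∑ k ∈ Finset.Ioc i t, 1 / (k : ℝ) ^ θ)) := by rw [hsum_eq]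
    have h2 : l * u / 2 ≤ α * ∑ k ∈ Finset.Ioc i t, 1 / (k : ℝ) ^ θ := by
      have hs := dsb_sum_inv_rpow θ hθ0 hθ2 i t hi1b
      have hhalf : ((i : ℝ) + 1) ≤ ((t : ℝ) + 1) / 2 := by
        have h' : ((2 * i + 1 : ℕ) : ℝ) ≤ (t : ℝ) := by exact_mod_cast hP
        push_cast at h'
        linarith
      have hc2' : (0 : ℝ) < (2 : ℝ) ^ (1 - θ) := Real.rpow_pos_of_pos two_pos _
      have hip1 : ((i : ℝ) + 1) ^ (1 - θ) ≤ u / 2 ^ (1 - θ) := by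
        calc ((i : ℝ) + 1) ^ (1 - θ) ≤ (((t : ℝ) + 1) / 2) ^ (1 - θ) :=
              Real.rpow_le_rpow (by positivity) hhalf h1θ.le
          _ = u / 2 ^ (1 - θ) := by
              rw [hu_def, Real.div_rpow ht1.le (by norm_num)]
      have hc2 : (2 : ℝ) ^ θ * 2 ^ (1 - θ) = 2 := by
        rw [← Real.rpow_add two_pos, show θ + (1 - θ) = 1 by ring, Real.rpow_one]
      have h2e : (2 : ℝ) ^ θ = 2 / 2 ^ (1 - θ) := by
        rw [eq_div_iff hc2'.ne']; exact hc2
      have heq : α * ((u - u / (2 : ℝ) ^ (1 - θ)) / (1 - θ)) = l * u / 2 := by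
        rw [hl_def, h2e]
        field_simp
      have hmono : (u - ((i : ℝ) + 1) ^ (1 - θ)) / (1 - θ)
          ≤ ∑ k ∈ Finset.Ioc i t, 1 / (k : ℝ) ^ θ := hs
      have hmono2 : (u - u / (2 : ℝ) ^ (1 - θ)) / (1 - θ)
          ≤ (u - ((i : ℝ) + 1) ^ (1 - θ)) / (1 - θ) :=
        (div_le_div_iff_of_pos_right h1θ).mpr (by linarith)
      calc l * u / 2 = α * ((u - u / (2 : ℝ) ^ (1 - θ)) / (1 - θ)) := heq.symm
        _ ≤ α * ((u - ((i : ℝ) + 1) ^ (1 - θ)) / (1 - θ)) :=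
            mul_le_mul_of_nonneg_left hmono2 hα1.le
        _ ≤ α * ∑ k ∈ Finset.Ioc i t, 1 / (k : ℝ) ^ θ :=
            mul_le_mul_of_nonneg_left hmono hα1.le
    have h3 : (∏ k ∈ Finset.Ioc i t, (1 - α / (k : ℝ) ^ θ)) ≤ Real.exp (-(l * u / 2)) :=
      le_trans h1 (Real.exp_le_exp.mpr (by linarith))
    calc (∏ k ∈ Finset.Ioc i t, (1 - α / (k : ℝ) ^ θ)) ^ 2
        ≤ (Real.exp (-(l * u / 2))) ^ 2 := pow_le_pow_left₀ (hD0 i) h3 2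
      _ = Real.exp (-(l * u)) := by
          rw [sq, ← Real.exp_add, show -(l * u / 2) + -(l * u / 2) = -(l * u) by ring]
  have hB : ∑ i ∈ (Finset.Icc 1 t).filter (fun i => 2 * i + 1 ≤ t),
      (1 / (i : ℝ) ^ (2 * θ)) * (∏ k ∈ Finset.Ioc i t, (1 - α / (k : ℝ) ^ θ)) ^ 2
      ≤ 2 / (2 * θ - 1) * (θ / (Real.exp 1 * (2 - 2 ^ θ))) ^ q
          * (1 / α) ^ q * (1 / ((t : ℝ) + 1)) ^ θ := by
    have hexp : Real.exp (-(l * u)) ≤ (q / (Real.exp 1 * l)) ^ q / u ^ q :=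
      dsb_exp_bound q l u hq0 hl hu
    have e5 : q / (Real.exp 1 * l) = (1 / α) * (θ / (Real.exp 1 * (2 - 2 ^ θ))) := by
      rw [hq_def, hl_def]
      field_simp
    have e5' : (q / (Real.exp 1 * l)) ^ q
        = (1 / α) ^ q * (θ / (Real.exp 1 * (2 - 2 ^ θ))) ^ q := by
      rw [e5, Real.mul_rpow (by positivity) hKbase.le]
    have e6 : u ^ q = ((t : ℝ) + 1) ^ θ := by
      rw [hu_def, ← Real.rpow_mul ht1.le,
        show (1 - θ) * q = θ by rw [hq_def, mul_comm, div_mul_cancel₀ θ h1θ.ne']]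
    have hc0 : (0 : ℝ) ≤ 2 / (2 * θ - 1) := div_nonneg (by norm_num) (by linarith)
    calc ∑ i ∈ (Finset.Icc 1 t).filter (fun i => 2 * i + 1 ≤ t),
          (1 / (i : ℝ) ^ (2 * θ)) * (∏ k ∈ Finset.Ioc i t, (1 - α / (k : ℝ) ^ θ)) ^ 2
        ≤ ∑ i ∈ (Finset.Icc 1 t).filter (fun i => 2 * i + 1 ≤ t),
            (1 / (i : ℝ) ^ (2 * θ)) * Real.exp (-(l * u)) :=
          Finset.sum_le_sum fun i hi =>
            mul_le_mul_of_nonneg_left (hB_term i hi) (by positivity)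
      _ = (∑ i ∈ (Finset.Icc 1 t).filter (fun i => 2 * i + 1 ≤ t),
            1 / (i : ℝ) ^ (2 * θ)) * Real.exp (-(l * u)) := by rw [← Finset.sum_mul]
      _ ≤ (2 / (2 * θ - 1)) * Real.exp (-(l * u)) :=
          mul_le_mul_of_nonneg_right
            (le_trans (Finset.sum_le_sum_of_subset_of_nonneg (Finset.filter_subset _ _)
              (fun i _ _ => by positivity)) (dsb_sum_sq θ hθ1 hθ2 t ht))
            (Real.exp_nonneg _)
      _ ≤ (2 / (2 * θ - 1)) * ((q / (Real.exp 1 * l)) ^ q / u ^ q) :=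
          mul_le_mul_of_nonneg_left hexp hc0
      _ = 2 / (2 * θ - 1) * (θ / (Real.exp 1 * (2 - 2 ^ θ))) ^ q
            * (1 / α) ^ q * (1 / ((t : ℝ) + 1)) ^ θ := by
          rw [e5', e6, eT]; ring
  -- Part A : i with t ≤ 2i
  have hA : ∑ i ∈ (Finset.Icc 1 t).filter (fun i => ¬(2 * i + 1 ≤ t)),
      (1 / (i : ℝ) ^ (2 * θ)) * (∏ k ∈ Finset.Ioc i t, (1 - α / (k : ℝ) ^ θ)) ^ 2
      ≤ 8 * (1 / α) ^ q * (1 / ((t : ℝ) + 1)) ^ θ := by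
    have hstepA : ∀ i ∈ (Finset.Icc 1 t).filter (fun i => ¬(2 * i + 1 ≤ t)),
        (1 / (i : ℝ) ^ (2 * θ)) * (∏ k ∈ Finset.Ioc i t, (1 - α / (k : ℝ) ^ θ)) ^ 2
          ≤ (4 * (1 / ((t : ℝ) + 1)) ^ θ * (1 / α)) *
            ((α / (i : ℝ) ^ θ) * ∏ k ∈ Finset.Ioc i t, (1 - α / (k : ℝ) ^ θ)) := by
      intro i hi
      obtain ⟨hi1, hP⟩ := Finset.mem_filter.mp hi
      obtain ⟨hia, hib⟩ := Finset.mem_Icc.mp hi1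
      have hti : t ≤ 2 * i := by omega
      have hi1' : (1 : ℝ) ≤ (i : ℝ) := by exact_mod_cast hia
      have hipos : (0 : ℝ) < (i : ℝ) := by linarith
      have hti' : (t : ℝ) ≤ 2 * (i : ℝ) := by exact_mod_cast hti
      have h4i : (t : ℝ) + 1 ≤ 4 * (i : ℝ) := by linarith
      have hip : (0 : ℝ) < (i : ℝ) ^ θ := Real.rpow_pos_of_pos hipos θ
      have hpow : ((t : ℝ) + 1) ^ θ ≤ 4 * (i : ℝ) ^ θ := by
        calc ((t : ℝ) + 1) ^ θ ≤ (4 * (i : ℝ)) ^ θ :=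
              Real.rpow_le_rpow ht1.le h4i hθ0.le
          _ = 4 ^ θ * (i : ℝ) ^ θ := Real.mul_rpow (by norm_num) hipos.le
          _ ≤ 4 * (i : ℝ) ^ θ := by
              have h41 : (4 : ℝ) ^ θ ≤ 4 := by
                calc (4 : ℝ) ^ θ ≤ 4 ^ (1 : ℝ) :=
                      Real.rpow_le_rpow_of_exponent_le (by norm_num) hθ2.le
                  _ = 4 := Real.rpow_one 4
              exact mul_le_mul_of_nonneg_right h41 hip.le
      have hinv : 1 / ((i : ℝ) ^ θ) ≤ 4 / (((t : ℝ) + 1) ^ θ) := by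
        rw [div_le_div_iff₀ hip hTpos]
        nlinarith [hpow]
      have hxd : (1 / ((i : ℝ) ^ θ)) * (∏ k ∈ Finset.Ioc i t, (1 - α / (k : ℝ) ^ θ))
          ≤ 4 / (((t : ℝ) + 1) ^ θ) :=
        le_trans (mul_le_mul hinv (hD1 i) (hD0 i) (by positivity)) (by rw [mul_one])
      have e1 : (1 : ℝ) / (i : ℝ) ^ (2 * θ) = (1 / (i : ℝ) ^ θ) * (1 / (i : ℝ) ^ θ) := by
        rw [show (2 : ℝ) * θ = θ + θ by ring, Real.rpow_add hipos, one_div_mul_one_div]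
      calc (1 / (i : ℝ) ^ (2 * θ)) * (∏ k ∈ Finset.Ioc i t, (1 - α / (k : ℝ) ^ θ)) ^ 2
          = ((1 / (i : ℝ) ^ θ) * ∏ k ∈ Finset.Ioc i t, (1 - α / (k : ℝ) ^ θ)) *
            ((1 / (i : ℝ) ^ θ) * ∏ k ∈ Finset.Ioc i t, (1 - α / (k : ℝ) ^ θ)) := by
            rw [e1]; ring
        _ ≤ (4 / (((t : ℝ) + 1) ^ θ)) *
            ((1 / (i : ℝ) ^ θ) * ∏ k ∈ Finset.Ioc i t, (1 - α / (k : ℝ) ^ θ)) :=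
            mul_le_mul_of_nonneg_right hxd (mul_nonneg (by positivity) (hD0 i))
        _ = (4 * (1 / ((t : ℝ) + 1)) ^ θ * (1 / α)) *
            ((α / (i : ℝ) ^ θ) * ∏ k ∈ Finset.Ioc i t, (1 - α / (k : ℝ) ^ θ)) := by
            rw [eT]
            field_simp
    calc ∑ i ∈ (Finset.Icc 1 t).filter (fun i => ¬(2 * i + 1 ≤ t)),
          (1 / (i : ℝ) ^ (2 * θ)) * (∏ k ∈ Finset.Ioc i t, (1 - α / (k : ℝ) ^ θ)) ^ 2
        ≤ ∑ i ∈ (Finset.Icc 1 t).filter (fun i => ¬(2 * i + 1 ≤ t)),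
            (4 * (1 / ((t : ℝ) + 1)) ^ θ * (1 / α)) *
            ((α / (i : ℝ) ^ θ) * ∏ k ∈ Finset.Ioc i t, (1 - α / (k : ℝ) ^ θ)) :=
          Finset.sum_le_sum hstepA
      _ = (4 * (1 / ((t : ℝ) + 1)) ^ θ * (1 / α)) *
          ∑ i ∈ (Finset.Icc 1 t).filter (fun i => ¬(2 * i + 1 ≤ t)),
            (α / (i : ℝ) ^ θ) * ∏ k ∈ Finset.Ioc i t, (1 - α / (k : ℝ) ^ θ) := by
          rw [Finset.mul_sum]
      _ ≤ (4 * (1 / ((t : ℝ) + 1)) ^ θ * (1 / α)) * 1 :=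
          mul_le_mul_of_nonneg_left (hsubsum _ (Finset.filter_subset _ _)) (by positivity)
      _ ≤ 8 * (1 / α) ^ q * (1 / ((t : ℝ) + 1)) ^ θ := by
          have hTα : 4 * (1 / α) ≤ 8 * (1 / α) ^ q := by
            nlinarith [hinvα, Real.rpow_nonneg (show (0:ℝ) ≤ 1/α by positivity) q]
          calc (4 * (1 / ((t : ℝ) + 1)) ^ θ * (1 / α)) * 1
              = (4 * (1 / α)) * (1 / ((t : ℝ) + 1)) ^ θ := by ring
            _ ≤ (8 * (1 / α) ^ q) * (1 / ((t : ℝ) + 1)) ^ θ :=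
                mul_le_mul_of_nonneg_right hTα hT0
            _ = 8 * (1 / α) ^ q * (1 / ((t : ℝ) + 1)) ^ θ := by ring
  calc (∑ i ∈ (Finset.Icc 1 t).filter (fun i => 2 * i + 1 ≤ t),
          (1 / (i : ℝ) ^ (2 * θ)) * (∏ k ∈ Finset.Ioc i t, (1 - α / (k : ℝ) ^ θ)) ^ 2)
        + ∑ i ∈ (Finset.Icc 1 t).filter (fun i => ¬(2 * i + 1 ≤ t)),
          (1 / (i : ℝ) ^ (2 * θ)) * (∏ k ∈ Finset.Ioc i t, (1 - α / (k : ℝ) ^ θ)) ^ 2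
      ≤ (2 / (2 * θ - 1) * (θ / (Real.exp 1 * (2 - 2 ^ θ))) ^ q
            * (1 / α) ^ q * (1 / ((t : ℝ) + 1)) ^ θ)
        + 8 * (1 / α) ^ q * (1 / ((t : ℝ) + 1)) ^ θ := add_le_add hB hA
    _ = (8 + 2 / (2 * θ - 1) * (θ / (Real.exp 1 * (2 - 2 ^ θ))) ^ q) *
          (1 / α) ^ q * (1 / ((t : ℝ) + 1)) ^ θ := by ring

theorem diagonal_sum_bound
    {Z : Type*} [MeasurableSpace Z]
    {W : Type*} [NormedAddCommGroup W] [InnerProductSpace ℝ W]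
    (ρ : Measure Z) [IsProbabilityMeasure ρ]
    (f : Z → W) (hf_meas : StronglyMeasurable f)
    (σ : ℝ) (hf_bd : ∀ z, ‖f z‖ ≤ σ)
    (θ α : ℝ) (hθ : θ ∈ Set.Ioo (1/2 : ℝ) 1) (hα : α ∈ Set.Ioc (0 : ℝ) 1)
    (t : ℕ) (ht : 1 ≤ t) :
    ∑ i ∈ Finset.Icc 1 t, (1 / (i : ℝ) ^ (2 * θ)) *
        (∏ k ∈ Finset.Ioc i t, (1 - α / (k : ℝ) ^ θ)) ^ 2 * (∫ z, ‖f z‖ ^ 2 ∂ρ) ≤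
      σ ^ 2 * (8 + 2 / (2 * θ - 1) * (θ / (Real.exp 1 * (2 - 2 ^ θ))) ^ (θ / (1 - θ))) *
        (1 / α) ^ (θ / (1 - θ)) * (1 / ((t : ℝ) + 1)) ^ θ := by
  obtain ⟨hθ1, hθ2⟩ := hθ
  obtain ⟨hα1, hα2⟩ := hα
  have hne : Nonempty Z := by
    by_contra h
    have h1 : (ρ Set.univ) = 1 := measure_univ
    rw [Set.univ_eq_empty_iff.mpr (not_nonempty_iff.mp h), measure_empty] at h1
    exact zero_ne_one h1
  obtain ⟨z0⟩ := hne
  have hσ0 : 0 ≤ σ := le_trans (norm_nonneg (f z0)) (hf_bd z0)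
  have hbd : ∀ z, ‖f z‖ ^ 2 ≤ σ ^ 2 := fun z =>
    pow_le_pow_left₀ (norm_nonneg _) (hf_bd z) 2
  have hInt : Integrable (fun z => ‖f z‖ ^ 2) ρ := by
    refine Integrable.mono' (integrable_const (σ ^ 2))
      ((hf_meas.norm.pow 2).aestronglyMeasurable) ?_
    filter_upwards with z
    rw [Real.norm_eq_abs, abs_of_nonneg (by positivity)]
    exact hbd z
  have hIle : (∫ z, ‖f z‖ ^ 2 ∂ρ) ≤ σ ^ 2 := by
    calc (∫ z, ‖f z‖ ^ 2 ∂ρ) ≤ ∫ _z, σ ^ 2 ∂ρ :=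
          integral_mono hInt (integrable_const _) hbd
      _ = σ ^ 2 := by simp
  have hI0 : 0 ≤ ∫ z, ‖f z‖ ^ 2 ∂ρ := integral_nonneg fun z => by positivity
  have hS0 : 0 ≤ ∑ i ∈ Finset.Icc 1 t, (1 / (i : ℝ) ^ (2 * θ)) *
      (∏ k ∈ Finset.Ioc i t, (1 - α / (k : ℝ) ^ θ)) ^ 2 :=
    Finset.sum_nonneg fun i _ => by positivity
  have hcore := dsb_core θ α hθ1 hθ2 hα1 hα2 t ht
  calc ∑ i ∈ Finset.Icc 1 t, (1 / (i : ℝ) ^ (2 * θ)) *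
        (∏ k ∈ Finset.Ioc i t, (1 - α / (k : ℝ) ^ θ)) ^ 2 * (∫ z, ‖f z‖ ^ 2 ∂ρ)
      = (∑ i ∈ Finset.Icc 1 t, (1 / (i : ℝ) ^ (2 * θ)) *
          (∏ k ∈ Finset.Ioc i t, (1 - α / (k : ℝ) ^ θ)) ^ 2) * (∫ z, ‖f z‖ ^ 2 ∂ρ) := by
        rw [← Finset.sum_mul]
    _ ≤ (∑ i ∈ Finset.Icc 1 t, (1 / (i : ℝ) ^ (2 * θ)) *
          (∏ k ∈ Finset.Ioc i t, (1 - α / (k : ℝ) ^ θ)) ^ 2) * σ ^ 2 :=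
        mul_le_mul_of_nonneg_left hIle hS0
    _ ≤ ((8 + 2 / (2 * θ - 1) * (θ / (Real.exp 1 * (2 - 2 ^ θ))) ^ (θ / (1 - θ))) *
          (1 / α) ^ (θ / (1 - θ)) * (1 / ((t : ℝ) + 1)) ^ θ) * σ ^ 2 :=
        mul_le_mul_of_nonneg_right hcore (by positivity)
    _ = σ ^ 2 * (8 + 2 / (2 * θ - 1) * (θ / (Real.exp 1 * (2 - 2 ^ θ))) ^ (θ / (1 - θ))) *
          (1 / α) ^ (θ / (1 - θ)) * (1 / ((t : ℝ) + 1)) ^ θ := by ring
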